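/- Let $f(x) = x^3 + \alpha x + \beta \in \mathbb{Q}_3[x]$ be an irreducible depressed cubic whose discriminant $\Delta = -4\alpha^3 - 27\beta^2$ is a square in $\mathbb{Q}_3$ and which generates a totally ramified extension. If $v_3(\beta) \equiv 0 \pmod 3$, then $v_3(\alpha) = \frac{2}{3}v_3(\beta) + 1$. -/

import Mathlib

open Polynomial

section VAux
variable {L : Type} [Field L] (v : L → ℚ)
  (hmul : ∀ x y : L, x ≠ 0 → y ≠ 0 → v (x * y) = v x + v y)
  (hadd : ∀ x y : L, x ≠ 0 → y ≠ 0 → x + y ≠ 0 → min (v x) (v y) ≤ v (x + y))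

include hmul

lemma vone : v 1 = 0 := by
  have := hmul 1 1 one_ne_zero one_ne_zero
  simpa using this.symm

lemma vneg (x : L) (hx : x ≠ 0) : v (-x) = v x := by
  have hm1 : v (-1 : L) = 0 := by
    have := hmul (-1) (-1) (by norm_num) (by norm_num)
    have h1 := vone v hmul
    simp at this
    linarith
  have := hmul (-1) x (by norm_num) hx
  simpa [hm1] using this

lemma vpow (x : L) (hx : x ≠ 0) (n : ℕ) : v (x ^ n) = n * v x := by
  induction n with
  | zero => simpa using vone v hmul
  | succ n ih =>
    have := hmul (x ^ n) x (pow_ne_zero _ hx) hx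
    rw [← pow_succ] at this
    rw [this, ih]
    push_cast
    ring

include hadd

lemma vlt (x y : L) (hx : x ≠ 0) (hy : y ≠ 0) (hv : v x < v y) :
    x + y ≠ 0 ∧ v (x + y) = v x := by
  have hne : x + y ≠ 0 := by
    intro h
    have hyx : y = -x := by
      have : x + y - x = 0 - x := by rw [h]
      simpa [sub_eq_add_neg] using this
    rw [hyx, vneg v hmul x hx] at hv
    exact lt_irrefl _ hv
  refine ⟨hne, ?_⟩
  have h1 : min (v x) (v y) ≤ v (x + y) := hadd x y hx hy hne
  have hminx : min (v x) (v y) = v x := min_eq_left hv.le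
  rw [hminx] at h1
  have h2 : v x ≥ min (v (x + y)) (v y) := by
    have hxy : (x + y) + (-y) = x := by ring
    have h3 := hadd (x + y) (-y) hne (neg_ne_zero.2 hy) (by rw [hxy]; exact hx)
    rw [hxy, vneg v hmul y hy] at h3
    exact h3
  rcases le_or_gt (v (x + y)) (v x) with h | h
  · exact le_antisymm h h1
  · exfalso
    rcases min_le_iff.1 h2 with h4 | h4 <;> linarith

/-- strict minimum of three: sum nonzero, valuation equals min -/
lemma vlt3 (x y z : L) (hx : x ≠ 0) (hy : y ≠ 0) (hz : z ≠ 0)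
    (hv1 : v x < v y) (hv2 : v x < v z) :
    x + y + z ≠ 0 ∧ v (x + y + z) = v x := by
  by_cases hyz : y + z = 0
  · have : x + y + z = x := by rw [add_assoc, hyz, add_zero]
    rw [this]
    exact ⟨hx, rfl⟩
  · have h1 : min (v y) (v z) ≤ v (y + z) := hadd y z hy hz hyz
    have h2 : v x < v (y + z) := lt_of_lt_of_le (lt_min hv1 hv2) h1
    have h3 := vlt v hmul hadd x (y + z) hx hyz h2
    rw [← add_assoc] at h3
    exact h3

omit hmul in
/-- generic ≥ min for three terms -/
lemma vge3 (x y z : L) (hz : z ≠ 0) (hs : x + y + z ≠ 0)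
    (q : ℚ) (hqx : x ≠ 0 → q ≤ v x) (hqy : y ≠ 0 → q ≤ v y) (hqz : q ≤ v z) :
    q ≤ v (x + y + z) := by
  by_cases hx : x = 0
  · subst hx
    simp only [zero_add] at hs ⊢
    by_cases hy : y = 0
    · subst hy; simpa using hqz
    · exact le_trans (le_min (hqy hy) hqz) (hadd y z hy hz hs)
  · by_cases hy : y = 0
    · subst hy
      simp only [add_zero] at hs ⊢
      exact le_trans (le_min (hqx hx) hqz) (hadd x z hx hz hs)
    · by_cases hxy : x + y = 0
      · rw [hxy, zero_add] at hs ⊢; exact hqz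
      · have h1 : min (v x) (v y) ≤ v (x + y) := hadd x y hx hy hxy
        have h2 := hadd (x + y) z hxy hz hs
        have := le_min (le_trans (le_min (hqx hx) (hqy hy)) h1) hqz
        exact le_trans this h2

end VAux

open Polynomial

namespace Stmt11Aux

local notation "P3" => (3 : ℚ_[3])

lemma pv3 : (3 : ℚ_[3]).valuation = 1 := by
  have h := Padic.valuation_p (p := 3)
  rwa [Nat.cast_ofNat] at h

lemma pvneg (x : ℚ_[3]) (hx : x ≠ 0) : (-x).valuation = x.valuation := by
  have hm1 : ((-1 : ℚ_[3])).valuation = 0 := by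
    have h := Padic.valuation_mul (p := 3) (x := -1) (y := -1) (by norm_num) (by norm_num)
    norm_num at h
    omega
  have := Padic.valuation_mul (p := 3) (x := -1) (y := x) (by norm_num) hx
  simp only [neg_one_mul] at this
  rw [this, hm1, zero_add]

lemma pvlt (x y : ℚ_[3]) (hx : x ≠ 0) (hy : y ≠ 0) (hv : x.valuation < y.valuation) :
    x + y ≠ 0 ∧ (x + y).valuation = x.valuation := by
  have hne : x + y ≠ 0 := by
    intro h
    have hyx : y = -x := by linear_combination h
    rw [hyx, pvneg x hx] at hv
    exact lt_irrefl _ hv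
  refine ⟨hne, ?_⟩
  have h1 := Padic.le_valuation_add (p := 3) hne
  rw [min_eq_left hv.le] at h1
  have h2 : min (x + y).valuation y.valuation ≤ x.valuation := by
    have hxy : (x + y) + (-y) = x := by ring
    have h3 := Padic.le_valuation_add (p := 3) (x := x + y) (y := -y) (by rw [hxy]; exact hx)
    rw [hxy, pvneg y hy] at h3
    exact h3
  rcases le_or_gt (x + y).valuation x.valuation with h | h
  · exact le_antisymm h h1
  · exfalso
    rcases min_le_iff.1 h2 with h4 | h4 <;> omega

lemma pvpow (x : ℚ_[3]) (hx : x ≠ 0) (n : ℕ) : (x ^ n).valuation = n * x.valuation := by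
  induction n with
  | zero => simp
  | succ n ih =>
    rw [pow_succ, Padic.valuation_mul (pow_ne_zero _ hx) hx, ih]
    push_cast; ring

lemma pvinv (x : ℚ_[3]) (hx : x ≠ 0) : (x⁻¹).valuation = -x.valuation := by
  have h := Padic.valuation_mul (p := 3) (x := x) (y := x⁻¹) hx (inv_ne_zero hx)
  rw [mul_inv_cancel₀ hx] at h
  rw [Padic.valuation_one] at h
  omega

lemma pvzpow (x : ℚ_[3]) (hx : x ≠ 0) (n : ℤ) : (x ^ n).valuation = n * x.valuation := by
  rcases le_or_gt 0 n with h | h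
  · lift n to ℕ using h
    rw [zpow_natCast, pvpow x hx]
  · have hn : ((-n).toNat : ℤ) = -n := Int.toNat_of_nonneg (by omega)
    have h2 : x ^ n = (x ^ ((-n).toNat))⁻¹ := by
      rw [← zpow_natCast x ((-n).toNat), hn, zpow_neg, inv_inv]
    rw [h2, pvinv _ (pow_ne_zero _ hx), pvpow x hx, hn]
    ring

lemma pnorm_le_of_val (x : ℚ_[3]) (hx : x ≠ 0) (m : ℤ) (h : m ≤ x.valuation) :
    ‖x‖ ≤ (3 : ℝ) ^ (-m) := by
  rw [Padic.norm_eq_zpow_neg_valuation hx]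
  have : ((3 : ℕ) : ℝ) = (3 : ℝ) := by norm_num
  rw [← this]
  apply zpow_le_zpow_right₀ (by norm_num)
  omega

lemma pnorm_eq_one (x : ℚ_[3]) (hx : x ≠ 0) (h : x.valuation = 0) : ‖x‖ = 1 := by
  rw [Padic.norm_eq_zpow_neg_valuation hx, h]
  norm_num

lemma cubic_hensel (c3 c1 c0 y0 : ℚ_[3]) (h3 : ‖c3‖ ≤ 1) (h1 : ‖c1‖ ≤ 1) (h0 : ‖c0‖ ≤ 1)
    (hy : ‖y0‖ ≤ 1)
    (hlt : ‖c3 * y0 ^ 3 + c1 * y0 + c0‖ < ‖3 * c3 * y0 ^ 2 + c1‖ ^ 2) :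
    ∃ z : ℚ_[3], ‖z‖ ≤ 1 ∧ c3 * z ^ 3 + c1 * z + c0 = 0 := by
  set a3 : ℤ_[3] := ⟨c3, h3⟩ with ha3
  set a1 : ℤ_[3] := ⟨c1, h1⟩ with ha1
  set a0 : ℤ_[3] := ⟨c0, h0⟩ with ha0
  set b : ℤ_[3] := ⟨y0, hy⟩ with hb
  set F : Polynomial ℤ_[3] := C a3 * X ^ 3 + C a1 * X + C a0 with hF
  have hev : ∀ t : ℤ_[3], ((F.eval t : ℤ_[3]) : ℚ_[3]) = c3 * (t : ℚ_[3]) ^ 3 + c1 * (t : ℚ_[3]) + c0 := by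
    intro t
    have : F.eval t = a3 * t ^ 3 + a1 * t + a0 := by
      simp [hF]
    rw [this]
    push_cast
    rfl
  have hder : F.derivative = C (3 * a3) * X ^ 2 + C a1 := by
    simp [hF, derivative_add, derivative_mul, derivative_C, derivative_X_pow]
    have h32 : (C 3 : ℤ_[3][X]) = C 2 + 1 := by rw [← C_1, ← C_add]; norm_num
    rw [h32]
    ring
  have hevd : ((F.derivative.eval b : ℤ_[3]) : ℚ_[3]) = 3 * c3 * y0 ^ 2 + c1 := by
    rw [hder]
    have : (C (3 * a3) * X ^ 2 + C a1).eval b = 3 * a3 * b ^ 2 + a1 := by simp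
    rw [this]
    push_cast
    rfl
  have hnorm : ‖F.eval b‖ < ‖F.derivative.eval b‖ ^ 2 := by
    rw [PadicInt.norm_def, PadicInt.norm_def, hev b, hevd]
    exact hlt
  obtain ⟨z, hz, -⟩ := hensels_lemma (F := F) (a := b) (by simpa only [coe_aeval_eq_eval] using hnorm)
  rw [coe_aeval_eq_eval] at hz
  refine ⟨(z : ℚ_[3]), ?_, ?_⟩
  · rw [← PadicInt.norm_def]; exact PadicInt.norm_le_one z
  · rw [← hev z, hz]; rfl

lemma cne01 (b c : ℤ) : (b:ℚ) ≠ (c:ℚ) + 1/3 := by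
  intro h
  have h3 : (3*b:ℚ) = 3*c + 1 := by linarith
  have h4 : (3*b:ℤ) = 3*c + 1 := by exact_mod_cast h3
  omega

lemma cne02 (b c : ℤ) : (b:ℚ) ≠ (c:ℚ) + 2/3 := by
  intro h
  have h3 : (3*b:ℚ) = 3*c + 2 := by linarith
  have h4 : (3*b:ℤ) = 3*c + 2 := by exact_mod_cast h3
  omega

lemma cne12 (b c : ℤ) : (b:ℚ) + 1/3 ≠ (c:ℚ) + 2/3 := by
  intro h
  have h3 : (3*b:ℚ) = 3*c + 1 := by linarith
  have h4 : (3*b:ℤ) = 3*c + 1 := by exact_mod_cast h3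
  omega

lemma coset_lb1 (k zc : ℤ) (h : (k:ℚ) < zc + 1/3) : (k:ℚ) + 1/3 ≤ (zc:ℚ) + 1/3 := by
  have h3 : (3*k:ℚ) < 3*zc + 1 := by linarith
  have h4 : (3*k:ℤ) < 3*zc + 1 := by exact_mod_cast h3
  have h5 : k ≤ zc := by omega
  have h6 : (k:ℚ) ≤ zc := by exact_mod_cast h5
  linarith

lemma coset_lb2 (k zc : ℤ) (h : (k:ℚ) < zc + 2/3) : (k:ℚ) + 1/3 ≤ (zc:ℚ) + 2/3 := by
  have h3 : (3*k:ℚ) < 3*zc + 2 := by linarith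
  have h4 : (3*k:ℤ) < 3*zc + 2 := by exact_mod_cast h3
  have h5 : k ≤ zc := by omega
  have h6 : (k:ℚ) ≤ zc := by exact_mod_cast h5
  linarith

end Stmt11Aux

open Stmt11Aux in
set_option maxHeartbeats 2000000 in
/-- If the irreducible depressed cubic `x³ + αx + β` over `ℚ₃` has square discriminant
`Δ = -4α³ - 27β²`, generates a totally ramified extension, and `v₃(β) ≡ 0 (mod 3)`,
then `v₃(α) = (2/3)v₃(β) + 1`. -/
theorem stmt_11 (α β : ℚ_[3])
    (hirr : Irreducible (X ^ 3 + C α * X + C β : Polynomial ℚ_[3]))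
    (hsq : ∃ d : ℚ_[3], d ^ 2 = -4 * α ^ 3 - 27 * β ^ 2)
    (L : Type) [Field L] [Algebra ℚ_[3] L]
    (θ : L) (hroot : Polynomial.aeval θ (X ^ 3 + C α * X + C β : Polynomial ℚ_[3]) = 0)
    (hgen : IntermediateField.adjoin ℚ_[3] {θ} = ⊤)
    (v : L → ℚ)
    (hmul : ∀ x y : L, x ≠ 0 → y ≠ 0 → v (x * y) = v x + v y)
    (hadd : ∀ x y : L, x ≠ 0 → y ≠ 0 → x + y ≠ 0 → min (v x) (v y) ≤ v (x + y))
    (hext : ∀ x : ℚ_[3], x ≠ 0 → v (algebraMap ℚ_[3] L x) = (x.valuation : ℚ))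
    (htot : ∃ x : L, x ≠ 0 ∧ v x = 1 / 3)
    (hβ : (3 : ℤ) ∣ β.valuation) :
    α ≠ 0 ∧ 3 * α.valuation = 2 * β.valuation + 3 := by
  classical
  have h3q : (3 : ℚ_[3]) ≠ 0 := by norm_num
  set f : Polynomial ℚ_[3] := X ^ 3 + C α * X + C β with hf
  have hf3 : f.natDegree = 3 := by rw [hf]; compute_degree!
  have hfne : f ≠ 0 := fun h => by simp [h] at hf3
  have noroot : ∀ r : ℚ_[3], r ^ 3 + α * r + β ≠ 0 := by
    intro r hr
    have hre : f.eval r = 0 := by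
      rw [hf]
      simp only [eval_add, eval_mul, eval_pow, eval_X, eval_C]
      linear_combination hr
    have hdvd : (X - C r) ∣ f := dvd_iff_isRoot.2 hre
    obtain ⟨q, hq⟩ := hdvd
    rcases hirr.isUnit_or_isUnit hq with hu | hu
    · exact Polynomial.not_isUnit_X_sub_C r hu
    · have hq0 : q ≠ 0 := fun h => hfne (by rw [hq, h, mul_zero])
      have hdeg : f.natDegree = 1 + q.natDegree := by
        rw [hq, natDegree_mul (X_sub_C_ne_zero r) hq0, natDegree_X_sub_C]
      rw [natDegree_eq_zero_of_isUnit hu] at hdeg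
      omega
  have hβ0 : β ≠ 0 := by
    intro h
    exact noroot 0 (by simp [h])
  set φ := algebraMap ℚ_[3] L with hφ
  have hφinj : Function.Injective φ := (algebraMap ℚ_[3] L).injective
  have hφne : ∀ x : ℚ_[3], x ≠ 0 → φ x ≠ 0 := by
    intro x hx h
    exact hx (hφinj (by simpa using h))
  have hrel : θ ^ 3 + φ α * θ + φ β = 0 := by
    have h := hroot
    rw [hf] at h
    simpa [map_add, map_mul, map_pow, aeval_X, aeval_C] using h
  have hθ0 : θ ≠ 0 := by
    intro h
    rw [h] at hrel
    simp at hrel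
    exact hβ0 (hφinj (by simpa using hrel))
  -- α ≠ 0
  have hα : α ≠ 0 := by
    intro h
    obtain ⟨d, hd⟩ := hsq
    have hd' : d ^ 2 = -((3:ℚ_[3]) ^ 3 * β ^ 2) := by rw [hd, h]; ring_nf
    have hrhs : ((3:ℚ_[3]) ^ 3 * β ^ 2) ≠ 0 := mul_ne_zero (pow_ne_zero _ h3q) (pow_ne_zero _ hβ0)
    have hd0 : d ≠ 0 := by
      intro h0
      have hz : -((3:ℚ_[3]) ^ 3 * β ^ 2) = 0 := by rw [← hd', h0]; norm_num
      exact hrhs (neg_eq_zero.1 hz)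
    have hv1 : (d ^ 2).valuation = 2 * d.valuation := pvpow d hd0 2
    have hv2 : ((-((3:ℚ_[3]) ^ 3 * β ^ 2))).valuation = 3 + 2 * β.valuation := by
      rw [pvneg _ hrhs, Padic.valuation_mul (pow_ne_zero _ h3q) (pow_ne_zero _ hβ0),
        pvpow _ h3q, pvpow _ hβ0, pv3]
      push_cast; ring
    rw [hd'] at hv1
    omega
  refine ⟨hα, ?_⟩
  obtain ⟨k, hk⟩ := hβ
  set a := α.valuation with ha
  have hA0 : φ α ≠ 0 := hφne α hα
  have hB0 : φ β ≠ 0 := hφne β hβ0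
  have vA : v (φ α) = (a : ℚ) := hext α hα
  have vB : v (φ β) = (3 * k : ℚ) := by rw [hext β hβ0, hk]; push_cast; ring
  have hv4 : (4 : ℚ_[3]).valuation = 0 := by
    have h13 : (1 : ℚ_[3]).valuation < (3 : ℚ_[3]).valuation := by
      rw [Padic.valuation_one, pv3]; norm_num
    have h2 := (pvlt 1 3 one_ne_zero h3q h13).2
    have h14 : (1:ℚ_[3]) + 3 = 4 := by norm_num
    rw [h14, Padic.valuation_one] at h2
    exact h2
  rcases (show a ≤ 2*k - 1 ∨ a = 2*k ∨ a = 2*k + 1 ∨ 2*k + 2 ≤ a by omega) with hc | hc | hc | hc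
  · -- a < 2k : Hensel, contradiction with irreducibility
    exfalso
    set c3 : ℚ_[3] := 3 ^ (6*k - 3*a : ℤ) with hc3
    set c1 : ℚ_[3] := α * 3 ^ (-a : ℤ) with hc1
    set c0 : ℚ_[3] := β * 3 ^ (-(3*k) : ℤ) with hc0
    have hc30 : c3 ≠ 0 := zpow_ne_zero _ h3q
    have hc10 : c1 ≠ 0 := mul_ne_zero hα (zpow_ne_zero _ h3q)
    have hc00 : c0 ≠ 0 := mul_ne_zero hβ0 (zpow_ne_zero _ h3q)
    have vc3 : c3.valuation = 6*k - 3*a := by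
      rw [hc3, pvzpow _ h3q, pv3]; ring
    have vc1 : c1.valuation = 0 := by
      rw [hc1, Padic.valuation_mul hα (zpow_ne_zero _ h3q), pvzpow _ h3q, pv3, ← ha]; ring
    have vc0 : c0.valuation = 0 := by
      rw [hc0, Padic.valuation_mul hβ0 (zpow_ne_zero _ h3q), pvzpow _ h3q, pv3, hk]; ring
    set y0 : ℚ_[3] := -c0 / c1 with hy0
    have hy00 : y0 ≠ 0 := by
      rw [hy0]
      exact div_ne_zero (neg_ne_zero.2 hc00) hc10
    have vy0 : y0.valuation = 0 := by
      rw [hy0, div_eq_mul_inv, Padic.valuation_mul (neg_ne_zero.2 hc00) (inv_ne_zero hc10),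
        pvneg _ hc00, pvinv _ hc10, vc0, vc1]
      ring
    have hsum0 : c1 * y0 + c0 = 0 := by
      rw [hy0]; field_simp; ring
    have hev : c3 * y0 ^ 3 + c1 * y0 + c0 = c3 * y0 ^ 3 := by
      rw [add_assoc, hsum0, add_zero]
    have hder0 : (3 * c3 * y0 ^ 2 + c1) = c1 + 3 * c3 * y0 ^ 2 := by ring
    have hd3 : (3 * c3 * y0 ^ 2) ≠ 0 := mul_ne_zero (mul_ne_zero h3q hc30) (pow_ne_zero _ hy00)
    have vder : (c1 + 3 * c3 * y0 ^ 2).valuation = 0 ∧ c1 + 3 * c3 * y0 ^ 2 ≠ 0 := by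
      have hvv : c1.valuation < (3 * c3 * y0 ^ 2).valuation := by
        rw [Padic.valuation_mul (mul_ne_zero h3q hc30) (pow_ne_zero _ hy00),
          Padic.valuation_mul h3q hc30, pvpow _ hy00, pv3, vc3, vc1, vy0]
        omega
      have h := pvlt _ _ hc10 hd3 hvv
      exact ⟨h.2.trans vc1, h.1⟩
    have hlt : ‖c3 * y0 ^ 3 + c1 * y0 + c0‖ < ‖3 * c3 * y0 ^ 2 + c1‖ ^ 2 := by
      rw [hev, hder0, pnorm_eq_one _ vder.2 vder.1]
      have hval : (1:ℤ) ≤ (c3 * y0 ^ 3).valuation := by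
        rw [Padic.valuation_mul hc30 (pow_ne_zero _ hy00), pvpow _ hy00, vc3, vy0]
        omega
      have := pnorm_le_of_val _ (mul_ne_zero hc30 (pow_ne_zero _ hy00)) 1 hval
      have h31 : (3:ℝ) ^ (-(1:ℤ)) < 1 := by norm_num
      nlinarith [norm_nonneg (c3 * y0 ^ 3)]
    obtain ⟨z, hz1, hz2⟩ := cubic_hensel c3 c1 c0 y0
      (pnorm_le_of_val _ hc30 0 (by omega) |>.trans (by norm_num))
      (pnorm_le_of_val _ hc10 0 (by omega) |>.trans (by norm_num))
      (pnorm_le_of_val _ hc00 0 (by omega) |>.trans (by norm_num))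
      (pnorm_le_of_val _ hy00 0 (by omega) |>.trans (by norm_num)) hlt
    set r : ℚ_[3] := 3 ^ (3*k - a : ℤ) * z with hr
    have e1 : ((3:ℚ_[3]) ^ ((3*k - a : ℤ))) ^ (3:ℕ) = 3 ^ ((3*k:ℤ)) * (3 ^ ((6*k - 3*a:ℤ))) := by
      rw [← zpow_natCast ((3:ℚ_[3]) ^ ((3*k - a : ℤ))) 3, ← zpow_mul, ← zpow_add₀ h3q]
      congr 1; ring
    have e2 : (3:ℚ_[3]) ^ ((3*k:ℤ)) * 3 ^ ((-a:ℤ)) = 3 ^ ((3*k - a:ℤ)) := by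
      rw [← zpow_add₀ h3q]
      congr 1
      try ring
    have e3 : (3:ℚ_[3]) ^ ((3*k:ℤ)) * 3 ^ ((-(3*k):ℤ)) = 1 := by
      rw [← zpow_add₀ h3q]
      try norm_num
    have key : r ^ 3 + α * r + β = 3 ^ ((3*k:ℤ)) * (c3 * z ^ 3 + c1 * z + c0) := by
      rw [hr, hc3, hc1, hc0]
      linear_combination z^3 * e1 - α*z*e2 - β*e3
    rw [hz2, mul_zero] at key
    exact noroot r key
  · -- a = 2k : main case, uses totally ramified
    exfalso
    -- totally ramified case analysis: a = 2k is impossible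
    have hfm : f.Monic := by rw [hf]; monicity!
    have hmin : minpoly ℚ_[3] θ = f := (minpoly.eq_of_irreducible_of_monic hirr hroot hfm).symm
    have hint : IsIntegral ℚ_[3] θ := ⟨f, hfm, hroot⟩
    have hfd0 : FiniteDimensional ℚ_[3] (IntermediateField.adjoin ℚ_[3] {θ}) :=
      IntermediateField.adjoin.finiteDimensional hint
    rw [hgen] at hfd0
    have hfd : FiniteDimensional ℚ_[3] L :=
      Module.Finite.equiv (IntermediateField.topEquiv (F := ℚ_[3]) (E := L)).toLinearEquiv
    have hrank : Module.finrank ℚ_[3] L = 3 := by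
      have h1 := IntermediateField.adjoin.finrank hint
      rw [hgen, hmin, hf3] at h1
      have h2 : Module.finrank ℚ_[3] (⊤ : IntermediateField ℚ_[3] L) = Module.finrank ℚ_[3] L :=
        (IntermediateField.topEquiv (F := ℚ_[3]) (E := L)).toLinearEquiv.finrank_eq
      omega
    obtain ⟨x, hx0, hx13⟩ := htot
    have hx20 : x ^ 2 ≠ 0 := pow_ne_zero _ hx0
    have vx2 : v (x ^ 2) = 2/3 := by rw [vpow v hmul x hx0 2, hx13]; norm_num
    have h3L : (3:L) = φ 3 := (map_ofNat φ 3).symm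
    have h3L0 : (3:L) ≠ 0 := by rw [h3L]; exact hφne _ h3q
    have v3L : v (3:L) = 1 := by
      rw [h3L, hext 3 h3q, pv3]; norm_num
    -- helpers
    have two_ne : ∀ u w : L, u ≠ 0 → w ≠ 0 → v u ≠ v w → u + w ≠ 0 := by
      intro u w hu hw hne
      rcases hne.lt_or_gt with h | h
      · exact (vlt v hmul hadd u w hu hw h).1
      · intro hs
        exact (vlt v hmul hadd w u hw hu h).1 (by linear_combination hs)
    have three_ne : ∀ u w z : L, u ≠ 0 → w ≠ 0 → z ≠ 0 →
        v u ≠ v w → v u ≠ v z → v w ≠ v z → u + w + z ≠ 0 := by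
      intro u w z hu hw hz huw huz hwz hs
      rcases lt_trichotomy (v u) (v w) with h1 | h1 | h1
      · rcases lt_trichotomy (v u) (v z) with h2 | h2 | h2
        · exact (vlt3 v hmul hadd u w z hu hw hz h1 h2).1 hs
        · exact huz h2
        · exact (vlt3 v hmul hadd z u w hz hu hw h2 (h2.trans h1)).1 (by linear_combination hs)
      · exact huw h1
      · rcases lt_trichotomy (v w) (v z) with h2 | h2 | h2
        · exact (vlt3 v hmul hadd w u z hw hu hz h1 h2).1 (by linear_combination hs)
        · exact hwz h2
        · exact (vlt3 v hmul hadd z u w hz hu hw (h2.trans h1) h2).1 (by linear_combination hs)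
    have vt1 : ∀ c : ℚ_[3], c ≠ 0 → v (φ c * x) = (c.valuation : ℚ) + 1/3 := by
      intro c hcne
      rw [hmul _ _ (hφne c hcne) hx0, hext c hcne, hx13]
    have vt2 : ∀ c : ℚ_[3], c ≠ 0 → v (φ c * x ^ 2) = (c.valuation : ℚ) + 2/3 := by
      intro c hcne
      rw [hmul _ _ (hφne c hcne) hx20, hext c hcne, vx2]
    have combo : ∀ c0 c1 c2 : ℚ_[3], ¬(c0 = 0 ∧ c1 = 0 ∧ c2 = 0) →
        φ c0 + φ c1 * x + φ c2 * x ^ 2 ≠ 0 := by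
      intro c0 c1 c2 hn
      by_cases h0 : c0 = 0 <;> by_cases h1 : c1 = 0 <;> by_cases h2 : c2 = 0
      · exact absurd ⟨h0, h1, h2⟩ hn
      · subst h0; subst h1
        simpa using mul_ne_zero (hφne c2 h2) hx20
      · subst h0; subst h2
        simpa using mul_ne_zero (hφne c1 h1) hx0
      · subst h0
        simp only [map_zero, zero_add]
        exact two_ne _ _ (mul_ne_zero (hφne c1 h1) hx0) (mul_ne_zero (hφne c2 h2) hx20)
          (by rw [vt1 c1 h1, vt2 c2 h2]; exact cne12 _ _)
      · subst h1; subst h2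
        simpa using hφne c0 h0
      · subst h1
        simp only [map_zero, zero_mul, add_zero]
        exact two_ne _ _ (hφne c0 h0) (mul_ne_zero (hφne c2 h2) hx20)
          (by rw [hext c0 h0, vt2 c2 h2]; exact cne02 _ _)
      · subst h2
        simp only [map_zero, zero_mul, add_zero]
        exact two_ne _ _ (hφne c0 h0) (mul_ne_zero (hφne c1 h1) hx0)
          (by rw [hext c0 h0, vt1 c1 h1]; exact cne01 _ _)
      · exact three_ne _ _ _ (hφne c0 h0) (mul_ne_zero (hφne c1 h1) hx0)
          (mul_ne_zero (hφne c2 h2) hx20)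
          (by rw [hext c0 h0, vt1 c1 h1]; exact cne01 _ _)
          (by rw [hext c0 h0, vt2 c2 h2]; exact cne02 _ _)
          (by rw [vt1 c1 h1, vt2 c2 h2]; exact cne12 _ _)
    have hli : LinearIndependent ℚ_[3] ![(1:L), x, x ^ 2] := by
      rw [Fintype.linearIndependent_iff]
      intro g hg
      have hg' : φ (g 0) + φ (g 1) * x + φ (g 2) * x ^ 2 = 0 := by
        have h := hg
        simp only [Fin.sum_univ_three, Matrix.cons_val_zero, Matrix.cons_val_one,
          Matrix.head_cons, Matrix.cons_val_two, Matrix.tail_cons, smul_eq_mul,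
          Algebra.smul_def, mul_one] at h
        exact h
      have hz : g 0 = 0 ∧ g 1 = 0 ∧ g 2 = 0 := by
        by_contra hn
        exact combo _ _ _ hn hg'
      intro i
      fin_cases i
      · exact hz.1
      · exact hz.2.1
      · exact hz.2.2
    have hcard : Fintype.card (Fin 3) = Module.finrank ℚ_[3] L := by
      rw [hrank]; simp
    set bb := basisOfLinearIndependentOfCardEqFinrank hli hcard with hbbdef
    have hbb : ⇑bb = ![(1:L), x, x ^ 2] :=
      coe_basisOfLinearIndependentOfCardEqFinrank hli hcard
    set e0 := bb.repr θ 0 with he0d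
    set e1 := bb.repr θ 1 with he1d
    set e2 := bb.repr θ 2 with he2d
    have hθr : φ e0 + φ e1 * x + φ e2 * x ^ 2 = θ := by
      have h := bb.sum_repr θ
      rw [Fin.sum_univ_three] at h
      rw [he0d, he1d, he2d]
      rw [hbb] at h
      simp only [Matrix.cons_val_zero, Matrix.cons_val_one, Matrix.head_cons,
        Matrix.cons_val_two, Matrix.tail_cons, Algebra.smul_def, mul_one] at h
      exact h
    -- v θ = k
    have hak : (a : ℚ) = 2 * k := by rw [hc]; push_cast; ring
    have hθ33 : θ ^ 3 ≠ 0 := pow_ne_zero _ hθ0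
    have hAθ : φ α * θ ≠ 0 := mul_ne_zero hA0 hθ0
    have vθ3 : v (θ ^ 3) = 3 * v θ := by
      rw [vpow v hmul θ hθ0 3]; push_cast; ring
    have vAθ : v (φ α * θ) = 2 * k + v θ := by
      rw [hmul _ _ hA0 hθ0, vA, hak]
    have vθ : v θ = (k : ℚ) := by
      rcases lt_trichotomy (v θ) (k : ℚ) with h | h | h
      · exfalso
        refine (vlt3 v hmul hadd (θ ^ 3) (φ α * θ) (φ β) hθ33 hAθ hB0 ?_ ?_).1 hrel
        · rw [vθ3, vAθ]; linarith
        · rw [vθ3, vB]; linarith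
      · exact h
      · exfalso
        refine (vlt3 v hmul hadd (φ β) (θ ^ 3) (φ α * θ) hB0 hθ33 hAθ ?_ ?_).1
          (by linear_combination hrel)
        · rw [vθ3, vB]; linarith
        · rw [vAθ, vB]; linarith
    -- the tail m
    set m := φ e1 * x + φ e2 * x ^ 2 with hmd
    have hθm : θ = φ e0 + m := by rw [hmd, ← hθr]; ring
    have he12 : ¬(e1 = 0 ∧ e2 = 0) := by
      rintro ⟨h1, h2⟩
      have hθe : θ = φ e0 := by rw [hθm, hmd, h1, h2]; simp
      apply noroot e0
      apply hφinj
      rw [map_add, map_add, map_mul, map_pow, map_zero]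
      rw [← hθe]
      exact hrel
    have hm_coset : m ≠ 0 ∧ ∃ zc : ℤ, v m = (zc:ℚ) + 1/3 ∨ v m = (zc:ℚ) + 2/3 := by
      by_cases h1 : e1 = 0
      · have h2 : e2 ≠ 0 := fun h => he12 ⟨h1, h⟩
        have hmeq : m = φ e2 * x ^ 2 := by rw [hmd, h1]; simp
        rw [hmeq]
        exact ⟨mul_ne_zero (hφne e2 h2) hx20, e2.valuation, Or.inr (vt2 e2 h2)⟩
      · by_cases h2 : e2 = 0
        · have hmeq : m = φ e1 * x := by rw [hmd, h2]; simp
          rw [hmeq]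
          exact ⟨mul_ne_zero (hφne e1 h1) hx0, e1.valuation, Or.inl (vt1 e1 h1)⟩
        · have hu0 : φ e1 * x ≠ 0 := mul_ne_zero (hφne e1 h1) hx0
          have hw0 : φ e2 * x ^ 2 ≠ 0 := mul_ne_zero (hφne e2 h2) hx20
          have hne : v (φ e1 * x) ≠ v (φ e2 * x ^ 2) := by
            rw [vt1 e1 h1, vt2 e2 h2]; exact cne12 _ _
          constructor
          · exact two_ne _ _ hu0 hw0 hne
          · rcases hne.lt_or_gt with h | h
            · refine ⟨e1.valuation, Or.inl ?_⟩
              rw [hmd, (vlt v hmul hadd _ _ hu0 hw0 h).2, vt1 e1 h1]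
            · refine ⟨e2.valuation, Or.inr ?_⟩
              have := (vlt v hmul hadd _ _ hw0 hu0 h).2
              rw [hmd]
              rw [show φ e1 * x + φ e2 * x ^ 2 = φ e2 * x ^ 2 + φ e1 * x by ring, this,
                vt2 e2 h2]
    obtain ⟨hm0, zc, hzc⟩ := hm_coset
    have he00 : e0 ≠ 0 := by
      intro h
      have hθe : θ = m := by rw [hθm, h]; simp
      rw [hθe] at vθ
      rcases hzc with h' | h'
      · exact cne01 k zc (vθ.symm.trans h')
      · exact cne02 k zc (vθ.symm.trans h')
    have vφe0 : v (φ e0) = (e0.valuation : ℚ) := hext e0 he00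
    have hvne : v (φ e0) ≠ v m := by
      rcases hzc with h' | h' <;> rw [vφe0, h']
      · exact cne01 _ _
      · exact cne02 _ _
    have hkey : (e0.valuation : ℚ) = k ∧ (k:ℚ) < v m := by
      rcases hvne.lt_or_gt with h | h
      · have hvθ' := (vlt v hmul hadd (φ e0) m (hφne e0 he00) hm0 h).2
        rw [← hθm] at hvθ'
        rw [vθ] at hvθ'
        refine ⟨by rw [← vφe0]; exact hvθ'.symm, ?_⟩
        rw [hvθ']; exact h
      · exfalso
        have hvθ' := (vlt v hmul hadd m (φ e0) hm0 (hφne e0 he00) h).2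
        have hsum : m + φ e0 = θ := by rw [hθm]; ring
        rw [hsum, vθ] at hvθ'
        rcases hzc with h' | h'
        · exact cne01 k zc (hvθ'.trans h')
        · exact cne02 k zc (hvθ'.trans h')
    have hvm13 : (k:ℚ) + 1/3 ≤ v m := by
      rcases hzc with h' | h'
      · rw [h']; rw [h'] at hkey; exact coset_lb1 k zc hkey.2
      · rw [h']; rw [h'] at hkey; exact coset_lb2 k zc hkey.2
    have he0vk : e0.valuation = k := by exact_mod_cast hkey.1
    -- the rational approximation E
    set E := e0 ^ 3 + α * e0 + β with hEd
    have hE0 : E ≠ 0 := noroot e0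
    have hφE : φ E = -((φ α + 3 * θ ^ 2) * m) + 3 * θ * m ^ 2 + -(m ^ 3) := by
      have hsub : φ e0 = θ - m := by rw [hθm]; ring
      rw [hEd, map_add, map_add, map_mul, map_pow, hsub]
      linear_combination hrel
    have hθ2 : θ ^ 2 ≠ 0 := pow_ne_zero _ hθ0
    have h3θ2 : (3:L) * θ ^ 2 ≠ 0 := mul_ne_zero h3L0 hθ2
    have v3θ2 : v ((3:L) * θ ^ 2) = 1 + 2*(k:ℚ) := by
      rw [hmul _ _ h3L0 hθ2, v3L, vpow v hmul θ hθ0 2, vθ]; push_cast; ring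
    have hT1a := vlt v hmul hadd (φ α) ((3:L) * θ ^ 2) hA0 h3θ2
      (by rw [vA, hak, v3θ2]; linarith)
    have hT1ne : -((φ α + 3 * θ ^ 2) * m) ≠ 0 := neg_ne_zero.2 (mul_ne_zero hT1a.1 hm0)
    have vT1 : v (-((φ α + 3 * θ ^ 2) * m)) = 2*(k:ℚ) + v m := by
      rw [vneg v hmul _ (mul_ne_zero hT1a.1 hm0), hmul _ _ hT1a.1 hm0, hT1a.2, vA, hak]
    have hT2ne : (3:L) * θ * m ^ 2 ≠ 0 := mul_ne_zero (mul_ne_zero h3L0 hθ0) (pow_ne_zero 2 hm0)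
    have vT2 : v ((3:L) * θ * m ^ 2) = 1 + (k:ℚ) + 2 * v m := by
      rw [hmul _ _ (mul_ne_zero h3L0 hθ0) (pow_ne_zero 2 hm0), hmul _ _ h3L0 hθ0, v3L, vθ,
        vpow v hmul m hm0 2]
      push_cast; ring
    have hT3ne : -(m ^ 3) ≠ 0 := neg_ne_zero.2 (pow_ne_zero 3 hm0)
    have vT3 : v (-(m ^ 3)) = 3 * v m := by
      rw [vneg v hmul _ (pow_ne_zero 3 hm0), vpow v hmul m hm0 3]; push_cast; ring
    have hφE0 : φ E ≠ 0 := hφne E hE0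
    have hgoal : 3*(k:ℚ) + 1/3 ≤ v (φ E) := by
      rw [hφE]
      refine vge3 v hadd _ _ _ hT3ne (by rw [← hφE]; exact hφE0) _ ?_ ?_ ?_
      · intro _
        rw [vT1]; linarith [hvm13]
      · intro _
        rw [vT2]; linarith [hvm13]
      · rw [vT3]; linarith [hvm13]
    have hEv : (3*k+1 : ℤ) ≤ E.valuation := by
      have h6 : 3*(k:ℚ) + 1/3 ≤ (E.valuation : ℚ) := by rw [← hext E hE0]; exact hgoal
      by_contra hcon
      push_neg at hcon
      have h7 : E.valuation ≤ 3*k := by omega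
      have h8 : (E.valuation:ℚ) ≤ 3*(k:ℚ) := by exact_mod_cast h7
      linarith
    -- Hensel step
    set c1' : ℚ_[3] := α * 3 ^ (-(2*k) : ℤ) with hc1'
    set c0' : ℚ_[3] := β * 3 ^ (-(3*k) : ℤ) with hc0'
    set y0' : ℚ_[3] := e0 * 3 ^ (-k : ℤ) with hy0'
    have hc1'0 : c1' ≠ 0 := mul_ne_zero hα (zpow_ne_zero _ h3q)
    have hc0'0 : c0' ≠ 0 := mul_ne_zero hβ0 (zpow_ne_zero _ h3q)
    have hy0'0 : y0' ≠ 0 := mul_ne_zero he00 (zpow_ne_zero _ h3q)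
    have vc1' : c1'.valuation = 0 := by
      rw [hc1', Padic.valuation_mul hα (zpow_ne_zero _ h3q), pvzpow _ h3q, pv3, ← ha]
      omega
    have vc0' : c0'.valuation = 0 := by
      rw [hc0', Padic.valuation_mul hβ0 (zpow_ne_zero _ h3q), pvzpow _ h3q, pv3, hk]
      ring
    have vy0' : y0'.valuation = 0 := by
      rw [hy0', Padic.valuation_mul he00 (zpow_ne_zero _ h3q), pvzpow _ h3q, pv3, he0vk]
      ring
    have u1 : ((3:ℚ_[3]) ^ ((-k : ℤ))) ^ (3:ℕ) = 3 ^ ((-(3*k):ℤ)) := by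
      rw [← zpow_natCast ((3:ℚ_[3]) ^ ((-k : ℤ))) 3, ← zpow_mul]
      congr 1
      try ring
    have u2 : (3:ℚ_[3]) ^ ((-(2*k):ℤ)) * 3 ^ ((-k:ℤ)) = 3 ^ ((-(3*k):ℤ)) := by
      rw [← zpow_add₀ h3q]
      congr 1
      try ring
    have hstar : 1 * y0' ^ 3 + c1' * y0' + c0' = E * 3 ^ ((-(3*k):ℤ)) := by
      rw [hy0', hc1', hc0', hEd]
      linear_combination e0^3 * u1 + α * e0 * u2
    have hder : 3 * 1 * y0' ^ 2 + c1' = c1' + 3 * y0' ^ 2 := by ring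
    have h3y2 : (3:ℚ_[3]) * y0' ^ 2 ≠ 0 := mul_ne_zero h3q (pow_ne_zero _ hy0'0)
    have hvder : c1'.valuation < ((3:ℚ_[3]) * y0' ^ 2).valuation := by
      rw [Padic.valuation_mul h3q (pow_ne_zero _ hy0'0), pv3, pvpow _ hy0'0, vc1', vy0']
      omega
    have hdd := pvlt _ _ hc1'0 h3y2 hvder
    have hlt : ‖1 * y0' ^ 3 + c1' * y0' + c0'‖ < ‖3 * 1 * y0' ^ 2 + c1'‖ ^ 2 := by
      rw [hstar, hder, pnorm_eq_one _ hdd.1 (hdd.2.trans vc1')]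
      have hval : (1:ℤ) ≤ (E * 3 ^ ((-(3*k):ℤ))).valuation := by
        rw [Padic.valuation_mul hE0 (zpow_ne_zero _ h3q), pvzpow _ h3q, pv3]
        omega
      have hn := pnorm_le_of_val _ (mul_ne_zero hE0 (zpow_ne_zero _ h3q)) 1 hval
      have h31 : (3:ℝ) ^ (-(1:ℤ)) < 1 := by norm_num
      nlinarith [norm_nonneg (E * (3:ℚ_[3]) ^ ((-(3*k):ℤ)))]
    obtain ⟨z, hz1, hz2⟩ := cubic_hensel 1 c1' c0' y0' (by norm_num)
      (pnorm_le_of_val _ hc1'0 0 (by omega) |>.trans (by norm_num))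
      (pnorm_le_of_val _ hc0'0 0 (by omega) |>.trans (by norm_num))
      (pnorm_le_of_val _ hy0'0 0 (by omega) |>.trans (by norm_num)) hlt
    set r : ℚ_[3] := 3 ^ (k : ℤ) * z with hr
    have w1 : ((3:ℚ_[3]) ^ ((k : ℤ))) ^ (3:ℕ) = 3 ^ ((3*k:ℤ)) := by
      rw [← zpow_natCast ((3:ℚ_[3]) ^ ((k : ℤ))) 3, ← zpow_mul]
      congr 1
      try ring
    have w2 : (3:ℚ_[3]) ^ ((3*k:ℤ)) * 3 ^ ((-(2*k):ℤ)) = 3 ^ ((k:ℤ)) := by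
      rw [← zpow_add₀ h3q]
      congr 1
      try ring
    have w3 : (3:ℚ_[3]) ^ ((3*k:ℤ)) * 3 ^ ((-(3*k):ℤ)) = 1 := by
      rw [← zpow_add₀ h3q]
      try norm_num
    have key : r ^ 3 + α * r + β = 3 ^ ((3*k:ℤ)) * (1 * z ^ 3 + c1' * z + c0') := by
      rw [hr, hc1', hc0']
      linear_combination z^3 * w1 - α * z * w2 - β * w3
    rw [hz2, mul_zero] at key
    exact noroot r key

  · -- a = 2k+1 : the conclusion
    omega
  · -- a ≥ 2k+2 : contradiction with square discriminant
    exfalso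
    obtain ⟨d, hd⟩ := hsq
    have hx0 : (-27 * β ^ 2 : ℚ_[3]) ≠ 0 := by
      intro h
      rcases mul_eq_zero.1 h with h' | h'
      · norm_num at h'
      · exact hβ0 (pow_eq_zero_iff (by norm_num) |>.1 h')
    have hy0 : (-4 * α ^ 3 : ℚ_[3]) ≠ 0 := by
      intro h
      rcases mul_eq_zero.1 h with h' | h'
      · norm_num at h'
      · exact hα (pow_eq_zero_iff (by norm_num) |>.1 h')
    have vx : (-27 * β ^ 2 : ℚ_[3]).valuation = 6*k + 3 := by
      have h27 : (-27 : ℚ_[3]) = -(3^3) := by norm_num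
      rw [Padic.valuation_mul (by norm_num : (-27:ℚ_[3]) ≠ 0) (pow_ne_zero _ hβ0), h27,
        pvneg _ (pow_ne_zero _ h3q), pvpow _ h3q, pv3, pvpow _ hβ0, hk]
      ring
    have vy : (-4 * α ^ 3 : ℚ_[3]).valuation = 3*a := by
      have h4 : (-4 : ℚ_[3]) = -(4) := by norm_num
      rw [Padic.valuation_mul (by norm_num : (-4:ℚ_[3]) ≠ 0) (pow_ne_zero _ hα), h4,
        pvneg _ (by norm_num : (4:ℚ_[3]) ≠ 0), hv4, pvpow _ hα, ← ha]
      ring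
    have hlt : (-27 * β ^ 2 : ℚ_[3]).valuation < (-4 * α ^ 3 : ℚ_[3]).valuation := by
      rw [vx, vy]; omega
    have hps := pvlt _ _ hx0 hy0 hlt
    have hd2 : d ^ 2 = (-27 * β ^ 2) + (-4 * α ^ 3) := by rw [hd]; ring
    have hd0 : d ≠ 0 := by
      intro h
      exact hps.1 (by rw [← hd2, h]; norm_num)
    have := pvpow d hd0 2
    rw [hd2, hps.2, vx] at this
    omega
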